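/- (Excess pinball risk upper bound under a density upper bound.) Let α ∈ (0,1), D > 0, L > 0, and let S be a real-valued random variable supported on [0, D] with a Lebesgue density f satisfying f(x) ≤ L/D for all x ∈ [0, D]. Let s* ∈ [0, D] satisfy P(S ≤ s*) = 1 − α. Then for every s ∈ [0, D]: E[ℓ_{1−α}(S, s)] − E[ℓ_{1−α}(S, s*)] ≤ L (s* − s)² / (2D). -/

import Mathlib

open MeasureTheory Set

/-- The `(1-α)`-pinball (quantile) loss `ℓ_{1-α}(S, s)`. -/
noncomputable def pinball (α S s : ℝ) : ℝ := max ((1 - α) * (S - s)) (α * (s - S))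

lemma pinball_eq {α : ℝ} (hα0 : 0 ≤ α) (hα1 : α ≤ 1) (x c : ℝ) :
    pinball α x c = (1 - α) * (x - c) + max (c - x) 0 := by
  unfold pinball
  rcases le_total x c with h | h
  · rw [max_eq_right (by nlinarith), max_eq_left (by linarith)]
    ring
  · rw [max_eq_left (by nlinarith), max_eq_right (by linarith)]
    ring

lemma pinball_abs_le {α : ℝ} (hα0 : 0 ≤ α) (hα1 : α ≤ 1) (x c : ℝ) :
    |pinball α x c| ≤ |x - c| := by
  unfold pinball
  rcases le_total x c with h | h
  · rw [max_eq_right (by nlinarith), abs_of_nonneg (by nlinarith), abs_of_nonpos (by linarith)]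
    nlinarith
  · rw [max_eq_left (by nlinarith), abs_of_nonneg (by nlinarith), abs_of_nonneg (by linarith)]
    nlinarith

lemma pinball_continuous (α c : ℝ) : Continuous (fun x => pinball α x c) := by
  unfold pinball; fun_prop

private lemma interval_calc {a b : ℝ} (hab : a ≤ b) :
    ∫ x in Set.Ioc a b, (b - x) = (b - a) ^ 2 / 2 := by
  rw [← intervalIntegral.integral_of_le hab,
    intervalIntegral.integral_sub intervalIntegrable_const intervalIntegral.intervalIntegrable_id,
    intervalIntegral.integral_const, integral_id]
  simp only [smul_eq_mul]
  ring

private lemma interval_calc' {a b : ℝ} (hab : a ≤ b) :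
    ∫ x in Set.Ioc a b, (x - a) = (b - a) ^ 2 / 2 := by
  rw [← intervalIntegral.integral_of_le hab,
    intervalIntegral.integral_sub intervalIntegral.intervalIntegrable_id intervalIntegrable_const,
    intervalIntegral.integral_const, integral_id]
  simp only [smul_eq_mul]
  ring

private lemma aux_bound {f : ℝ → ℝ} (hf_nonneg : ∀ x, 0 ≤ f x) (hf_meas : Measurable f)
    (hf_int : Integrable f) {L D : ℝ} (hD : 0 < D)
    {a b : ℝ} (hab : a ≤ b) (hfb : ∀ x ∈ Set.Ioc a b, f x ≤ L / D)
    {g : ℝ → ℝ} (hg_cont : Continuous g) (hg0 : ∀ x ∈ Set.Ioc a b, 0 ≤ g x)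
    (hg1 : ∀ x ∈ Set.Ioc a b, g x ≤ b - a)
    (hgint : ∫ x in Set.Ioc a b, g x = (b - a) ^ 2 / 2) :
    ∫ x in Set.Ioc a b, f x * g x ≤ L * (b - a) ^ 2 / (2 * D) := by
  have int1 : IntegrableOn (fun x => f x * g x) (Set.Ioc a b) volume := by
    refine Integrable.mono' (hf_int.restrict.mul_const (b - a))
      ((hf_meas.mul hg_cont.measurable).aestronglyMeasurable.restrict) ?_
    refine (ae_restrict_iff' measurableSet_Ioc).2 (Filter.Eventually.of_forall fun x hx => ?_)
    rw [Real.norm_eq_abs, abs_of_nonneg (mul_nonneg (hf_nonneg x) (hg0 x hx))]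
    exact mul_le_mul_of_nonneg_left (hg1 x hx) (hf_nonneg x)
  have int2 : IntegrableOn (fun x => (L / D) * g x) (Set.Ioc a b) volume :=
    (continuous_const.mul hg_cont).integrableOn_Ioc
  have h1 : ∫ x in Set.Ioc a b, f x * g x ≤ ∫ x in Set.Ioc a b, (L / D) * g x :=
    setIntegral_mono_on int1 int2 measurableSet_Ioc
      (fun x hx => mul_le_mul_of_nonneg_right (hfb x hx) (hg0 x hx))
  rw [integral_const_mul, hgint] at h1
  calc ∫ x in Set.Ioc a b, f x * g x ≤ L / D * ((b - a) ^ 2 / 2) := h1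
    _ = L * (b - a) ^ 2 / (2 * D) := by rw [div_mul_div_comm, mul_comm D 2]

/-- Excess pinball risk upper bound under a density upper bound: if `S` is supported on
`[0, D]` with Lebesgue density `f ≤ L/D` on `[0, D]` and `s*` satisfies
`P(S ≤ s*) = 1 - α`, then for every `s ∈ [0, D]`,
`E[ℓ_{1-α}(S, s)] - E[ℓ_{1-α}(S, s*)] ≤ L (s* - s)² / (2D)`. -/
theorem pinball_excess_risk_upper_bound
    {Ω : Type*} [MeasurableSpace Ω] (μ : Measure Ω) [IsProbabilityMeasure μ]
    (α D L : ℝ) (hα : α ∈ Set.Ioo (0:ℝ) 1) (hD : 0 < D) (hL : 0 < L)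
    (S : Ω → ℝ) (hmeas : Measurable S)
    (hsupp : ∀ᵐ ω ∂μ, S ω ∈ Set.Icc 0 D)
    (f : ℝ → ℝ) (hf_nonneg : ∀ x, 0 ≤ f x) (hf_meas : Measurable f)
    (hdensity : Measure.map S μ = volume.withDensity (fun x => ENNReal.ofReal (f x)))
    (hf_ub : ∀ x ∈ Set.Icc (0:ℝ) D, f x ≤ L / D)
    (sstar : ℝ) (hsstar : sstar ∈ Set.Icc 0 D)
    (hquantile : (μ {ω | S ω ≤ sstar}).toReal = 1 - α) :
    ∀ s ∈ Set.Icc (0:ℝ) D,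
      (∫ ω, pinball α (S ω) s ∂μ) - (∫ ω, pinball α (S ω) sstar ∂μ)
        ≤ L * (sstar - s) ^ 2 / (2 * D) := by
  intro s hs
  obtain ⟨hα0, hα1⟩ := hα
  set ν := Measure.map S μ with hν_def
  haveI hνprob : IsProbabilityMeasure ν := Measure.isProbabilityMeasure_map hmeas.aemeasurable
  -- f is integrable with integral mass 1
  have hf_int : Integrable f volume := by
    refine ⟨hf_meas.aestronglyMeasurable, ?_⟩
    rw [hasFiniteIntegral_iff_ofReal (Filter.Eventually.of_forall hf_nonneg)]
    have : (volume.withDensity (fun x => ENNReal.ofReal (f x))) Set.univ = 1 := by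
      rw [← hdensity]; exact measure_univ
    rw [withDensity_apply _ MeasurableSet.univ, Measure.restrict_univ] at this
    rw [this]; exact ENNReal.one_lt_top
  -- transfer integrals to ν
  have htrans : ∀ c : ℝ, (∫ ω, pinball α (S ω) c ∂μ) = ∫ x, pinball α x c ∂ν := fun c =>
    (integral_map hmeas.aemeasurable (pinball_continuous α c).aestronglyMeasurable).symm
  have hν_ae : ∀ᵐ x ∂ν, x ∈ Set.Icc (0:ℝ) D :=
    (ae_map_iff hmeas.aemeasurable measurableSet_Icc).2 hsupp
  have h_int : ∀ c ∈ Set.Icc (0:ℝ) D, Integrable (fun x => pinball α x c) ν := by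
    intro c hc
    refine Integrable.mono' (integrable_const D)
      (pinball_continuous α c).aestronglyMeasurable ?_
    filter_upwards [hν_ae] with x hx
    rw [Real.norm_eq_abs]
    refine (pinball_abs_le hα0.le hα1.le x c).trans ?_
    rw [abs_sub_le_iff]
    constructor <;> [skip; skip] <;>
      · obtain ⟨h1, h2⟩ := hx; obtain ⟨h3, h4⟩ := hc; linarith
  -- CDF at sstar
  have hF : (ν (Set.Iic sstar)).toReal = 1 - α := by
    rw [hν_def, Measure.map_apply hmeas measurableSet_Iic]
    exact hquantile
  -- measure facts
  have hν_Iic : ∀ c : ℝ, (ν (Set.Iic c)).toReal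
      = ∫ x, (Set.Iic c).indicator (fun _ => (1:ℝ)) x ∂ν := by
    intro c
    rw [integral_indicator measurableSet_Iic, setIntegral_const, smul_eq_mul, mul_one]
    rfl
  rw [htrans s, htrans sstar]
  -- the with-density rewriting for set integrals
  have hsetint : ∀ (A : Set ℝ), MeasurableSet A → ∀ g : ℝ → ℝ,
      ∫ x in A, g x ∂ν = ∫ x in A, f x * g x := by
    intro A hA g
    rw [hdensity]
    have : (fun x => ENNReal.ofReal (f x)) = fun x => ((Real.toNNReal (f x) : NNReal) : ENNReal) :=
      rfl
    rw [this, setIntegral_withDensity_eq_setIntegral_smul (hf_meas.real_toNNReal) g hA]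
    refine setIntegral_congr_fun hA fun x _ => ?_
    simp [NNReal.smul_def, Real.coe_toNNReal _ (hf_nonneg x)]
  rcases le_total sstar s with hcase | hcase
  · -- sstar ≤ s
    have hdiff : ∀ x : ℝ, pinball α x s - pinball α x sstar
        = (1 - α) * (sstar - s) + ((Set.Iic sstar).indicator (fun _ => s - sstar) x
          + (Set.Ioc sstar s).indicator (fun y => s - y) x) := by
      intro x
      rw [pinball_eq hα0.le hα1.le, pinball_eq hα0.le hα1.le]
      by_cases h1 : x ≤ sstar
      · rw [Set.indicator_of_mem (Set.mem_Iic.2 h1), Set.indicator_of_notMem (by simp [Set.mem_Ioc]; intro h; linarith)]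
        rw [max_eq_left (by linarith), max_eq_left (by linarith)]
        ring
      · push_neg at h1
        by_cases h2 : x ≤ s
        · rw [Set.indicator_of_notMem (by simpa using h1),
            Set.indicator_of_mem (Set.mem_Ioc.2 ⟨h1, h2⟩)]
          rw [max_eq_left (by linarith), max_eq_right (by linarith)]
          ring
        · push_neg at h2
          rw [Set.indicator_of_notMem (by simpa using h1),
            Set.indicator_of_notMem (by simp [Set.mem_Ioc]; intro h; linarith)]
          rw [max_eq_right (by linarith), max_eq_right (by linarith)]
          ring
    have hint_ind1 : Integrable ((Set.Iic sstar).indicator (fun _ => s - sstar)) ν :=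
      (integrable_const (s - sstar)).indicator measurableSet_Iic
    have hint_ind2 : Integrable ((Set.Ioc sstar s).indicator (fun y => s - y)) ν := by
      refine Integrable.mono' (integrable_const D)
        (((continuous_const.sub continuous_id).aestronglyMeasurable).indicator measurableSet_Ioc) ?_
      refine Filter.Eventually.of_forall fun x => ?_
      rw [Real.norm_eq_abs]
      by_cases hx : x ∈ Set.Ioc sstar s
      · rw [Set.indicator_of_mem hx]
        obtain ⟨h1, h2⟩ := hx
        rw [abs_of_nonneg (by linarith)]
        obtain ⟨h3, h4⟩ := hs; obtain ⟨h5, h6⟩ := hsstar; linarith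
      · rw [Set.indicator_of_notMem hx]; simp [hD.le]
    have key : (∫ x, pinball α x s ∂ν) - (∫ x, pinball α x sstar ∂ν)
        = ∫ x in Set.Ioc sstar s, f x * (s - x) := by
      rw [← integral_sub (h_int s hs) (h_int sstar hsstar)]
      calc ∫ x, (pinball α x s - pinball α x sstar) ∂ν
          = ∫ x, ((1 - α) * (sstar - s) + ((Set.Iic sstar).indicator (fun _ => s - sstar) x
            + (Set.Ioc sstar s).indicator (fun y => s - y) x)) ∂ν := by
            exact integral_congr_ae (Filter.Eventually.of_forall hdiff)
        _ = (1 - α) * (sstar - s) + ((ν (Set.Iic sstar)).toReal * (s - sstar)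
            + ∫ x in Set.Ioc sstar s, (s - x) ∂ν) := by
            have hsum : Integrable (fun x => (Set.Iic sstar).indicator (fun _ => s - sstar) x
                + (Set.Ioc sstar s).indicator (fun y => s - y) x) ν := hint_ind1.add hint_ind2
            rw [integral_add (integrable_const _) hsum,
              integral_add hint_ind1 hint_ind2, integral_const, probReal_univ,
              one_smul, integral_indicator_const _ measurableSet_Iic,
              integral_indicator measurableSet_Ioc, smul_eq_mul]
            rfl
        _ = ∫ x in Set.Ioc sstar s, f x * (s - x) := by
            rw [hF, hsetint _ measurableSet_Ioc]
            ring
    rw [key]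
    have := aux_bound hf_nonneg hf_meas hf_int hD hcase
      (f := f) (g := fun x => s - x)
      (fun x hx => hf_ub x ⟨by obtain ⟨h1, h2⟩ := hx; obtain ⟨h3, _⟩ := hsstar; linarith,
        by obtain ⟨h1, h2⟩ := hx; obtain ⟨_, h4⟩ := hs; linarith⟩)
      (continuous_const.sub continuous_id)
      (fun x hx => by obtain ⟨h1, h2⟩ := hx; simp; linarith)
      (fun x hx => by obtain ⟨h1, h2⟩ := hx; simp; linarith)
      (interval_calc hcase)
    calc ∫ x in Set.Ioc sstar s, f x * (s - x) ≤ L * (s - sstar) ^ 2 / (2 * D) := this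
      _ = L * (sstar - s) ^ 2 / (2 * D) := by ring_nf
  · -- s ≤ sstar
    have hdiff : ∀ x : ℝ, pinball α x s - pinball α x sstar
        = (1 - α) * (sstar - s) - ((Set.Iic s).indicator (fun _ => sstar - s) x
          + (Set.Ioc s sstar).indicator (fun y => sstar - y) x) := by
      intro x
      rw [pinball_eq hα0.le hα1.le, pinball_eq hα0.le hα1.le]
      by_cases h1 : x ≤ s
      · rw [Set.indicator_of_mem (Set.mem_Iic.2 h1), Set.indicator_of_notMem (by simp [Set.mem_Ioc]; intro h; linarith)]
        rw [max_eq_left (by linarith), max_eq_left (by linarith)]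
        ring
      · push_neg at h1
        by_cases h2 : x ≤ sstar
        · rw [Set.indicator_of_notMem (by simpa using h1),
            Set.indicator_of_mem (Set.mem_Ioc.2 ⟨h1, h2⟩)]
          rw [max_eq_right (by linarith), max_eq_left (by linarith)]
          ring
        · push_neg at h2
          rw [Set.indicator_of_notMem (by simpa using h1),
            Set.indicator_of_notMem (by simp [Set.mem_Ioc]; intro h; linarith)]
          rw [max_eq_right (by linarith), max_eq_right (by linarith)]
          ring
    have hint_ind1 : Integrable ((Set.Iic s).indicator (fun _ => sstar - s)) ν :=
      (integrable_const (sstar - s)).indicator measurableSet_Iic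
    have hint_ind2 : Integrable ((Set.Ioc s sstar).indicator (fun y => sstar - y)) ν := by
      refine Integrable.mono' (integrable_const D)
        (((continuous_const.sub continuous_id).aestronglyMeasurable).indicator measurableSet_Ioc) ?_
      refine Filter.Eventually.of_forall fun x => ?_
      rw [Real.norm_eq_abs]
      by_cases hx : x ∈ Set.Ioc s sstar
      · rw [Set.indicator_of_mem hx]
        obtain ⟨h1, h2⟩ := hx
        rw [abs_of_nonneg (by linarith)]
        obtain ⟨h3, h4⟩ := hs; obtain ⟨h5, h6⟩ := hsstar; linarith
      · rw [Set.indicator_of_notMem hx]; simp [hD.le]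
    -- split the CDF
    have hsplit : (ν (Set.Iic sstar)).toReal
        = (ν (Set.Iic s)).toReal + (ν (Set.Ioc s sstar)).toReal := by
      rw [← Set.Iic_union_Ioc_eq_Iic hcase,
        measure_union (Set.Iic_disjoint_Ioc le_rfl) measurableSet_Ioc,
        ENNReal.toReal_add (measure_ne_top _ _) (measure_ne_top _ _)]
    have hIoc_toReal : (ν (Set.Ioc s sstar)).toReal = ∫ x in Set.Ioc s sstar, f x := by
      have h1 : (ν (Set.Ioc s sstar)).toReal = ∫ x in Set.Ioc s sstar, (1:ℝ) ∂ν := by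
        rw [setIntegral_const, smul_eq_mul, mul_one]
        rfl
      rw [h1, hsetint _ measurableSet_Ioc]
      simp
    have key : (∫ x, pinball α x s ∂ν) - (∫ x, pinball α x sstar ∂ν)
        = ∫ x in Set.Ioc s sstar, f x * (x - s) := by
      rw [← integral_sub (h_int s hs) (h_int sstar hsstar)]
      have step1 : ∫ x, (pinball α x s - pinball α x sstar) ∂ν
          = (1 - α) * (sstar - s) - ((ν (Set.Iic s)).toReal * (sstar - s)
            + ∫ x in Set.Ioc s sstar, (sstar - x) ∂ν) := by
        calc ∫ x, (pinball α x s - pinball α x sstar) ∂ν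
            = ∫ x, ((1 - α) * (sstar - s) - ((Set.Iic s).indicator (fun _ => sstar - s) x
              + (Set.Ioc s sstar).indicator (fun y => sstar - y) x)) ∂ν :=
              integral_congr_ae (Filter.Eventually.of_forall hdiff)
          _ = _ := by
              have hsum : Integrable (fun x => (Set.Iic s).indicator (fun _ => sstar - s) x
                  + (Set.Ioc s sstar).indicator (fun y => sstar - y) x) ν := hint_ind1.add hint_ind2
              rw [integral_sub (integrable_const _) hsum,
                integral_add hint_ind1 hint_ind2, integral_const, probReal_univ,
                one_smul, integral_indicator_const _ measurableSet_Iic,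
                integral_indicator measurableSet_Ioc, smul_eq_mul]
              rfl
      rw [step1, ← hF, hsplit, hIoc_toReal, hsetint _ measurableSet_Ioc]
      have hintf : IntegrableOn f (Set.Ioc s sstar) volume := hf_int.restrict
      have hint_fg : IntegrableOn (fun x => f x * (sstar - x)) (Set.Ioc s sstar) volume := by
        refine Integrable.mono' (hintf.mul_const (sstar - s))
          ((hf_meas.mul (measurable_const.sub measurable_id)).aestronglyMeasurable.restrict) ?_
        refine (ae_restrict_iff' measurableSet_Ioc).2 (Filter.Eventually.of_forall fun x hx => ?_)
        obtain ⟨h1, h2⟩ := hx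
        rw [Real.norm_eq_abs, abs_of_nonneg (mul_nonneg (hf_nonneg x) (by linarith))]
        exact mul_le_mul_of_nonneg_left (by linarith) (hf_nonneg x)
      have comb : ((ν (Set.Iic s)).toReal + ∫ x in Set.Ioc s sstar, f x) * (sstar - s)
            - ((ν (Set.Iic s)).toReal * (sstar - s) + ∫ x in Set.Ioc s sstar, f x * (sstar - x))
          = ∫ x in Set.Ioc s sstar, f x * (x - s) := by
        have e1 : (∫ x in Set.Ioc s sstar, f x) * (sstar - s)
            = ∫ x in Set.Ioc s sstar, f x * (sstar - s) := (integral_mul_const _ _).symm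
        rw [add_mul, e1]
        have e2 : (∫ x in Set.Ioc s sstar, f x * (sstar - s))
              - ∫ x in Set.Ioc s sstar, f x * (sstar - x)
            = ∫ x in Set.Ioc s sstar, f x * (x - s) := by
          rw [← integral_sub (hintf.mul_const _) hint_fg]
          exact integral_congr_ae (Filter.Eventually.of_forall fun x => by ring)
        linarith
      linarith [comb]
    rw [key]
    have := aux_bound hf_nonneg hf_meas hf_int hD hcase
      (f := f) (g := fun x => x - s)
      (fun x hx => hf_ub x ⟨by obtain ⟨h1, h2⟩ := hx; obtain ⟨h3, _⟩ := hs; linarith,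
        by obtain ⟨h1, h2⟩ := hx; obtain ⟨_, h4⟩ := hsstar; linarith⟩)
      (continuous_id.sub continuous_const)
      (fun x hx => by obtain ⟨h1, h2⟩ := hx; simp; linarith)
      (fun x hx => by obtain ⟨h1, h2⟩ := hx; simp; linarith)
      (interval_calc' hcase)
    exact this
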